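/- Let R be a 3-torsion free prime alternative ring with a nontrivial idempotent e₁. Then R satisfies both: (i) for all a₁₁ ∈ R₁₁ and a₂₂ ∈ R₂₂, if [a₁₁ + a₂₂, m] = 0 for every m ∈ R₁₂, then a₁₁ + a₂₂ ∈ Z(R); and (ii) for all a₁₁ ∈ R₁₁ and a₂₂ ∈ R₂₂, if [a₁₁ + a₂₂, m] = 0 for every m ∈ R₂₁, then a₁₁ + a₂₂ ∈ Z(R). -/

import Mathlib

/-- The Lie bracket (commutator) in a not-necessarily-associative ring. -/
def lieBr {R : Type*} [NonUnitalNonAssocRing R] (x y : R) : R := x * y - y * x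

/-- `R` is an alternative ring: `(x*x)*y = x*(x*y)` and `(y*x)*x = y*(x*x)`. -/
def IsAlternative (R : Type*) [NonUnitalNonAssocRing R] : Prop :=
  (∀ x y : R, x * x * y = x * (x * y)) ∧ (∀ x y : R, y * x * x = y * (x * x))

/-- The centre of a not-necessarily-associative ring: elements `r` whose associators
`(r,x,y)`, `(x,r,y)`, `(x,y,r)` all vanish and which commute with everything. -/
def ringCenter (R : Type*) [NonUnitalNonAssocRing R] : Set R :=
  {r | (∀ x y : R, r * x * y = r * (x * y)) ∧ (∀ x y : R, x * r * y = x * (r * y)) ∧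
       (∀ x y : R, x * y * r = x * (y * r)) ∧ (∀ x : R, r * x = x * r)}

/-- `e` is a nontrivial idempotent: idempotent, nonzero and not a multiplicative identity. -/
def IsNontrivialIdempotent {R : Type*} [NonUnitalNonAssocRing R] (e : R) : Prop :=
  e * e = e ∧ e ≠ 0 ∧ ¬ (∀ x : R, e * x = x ∧ x * e = x)

/-- Peirce component `R₁₁` relative to the idempotent `e`. -/
def peirce11 {R : Type*} [NonUnitalNonAssocRing R] (e : R) : Set R :=
  {x | e * x = x ∧ x * e = x}

/-- Peirce component `R₁₂` relative to the idempotent `e`. -/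
def peirce12 {R : Type*} [NonUnitalNonAssocRing R] (e : R) : Set R :=
  {x | e * x = x ∧ x * e = 0}

/-- Peirce component `R₂₁` relative to the idempotent `e`. -/
def peirce21 {R : Type*} [NonUnitalNonAssocRing R] (e : R) : Set R :=
  {x | e * x = 0 ∧ x * e = x}

/-- Peirce component `R₂₂` relative to the idempotent `e`. -/
def peirce22 {R : Type*} [NonUnitalNonAssocRing R] (e : R) : Set R :=
  {x | e * x = 0 ∧ x * e = 0}

/-- Condition (i): if `a₁₁ + a₂₂` commutes with every element of `R₁₂`, it is central. -/
def CondI {R : Type*} [NonUnitalNonAssocRing R] (e : R) : Prop :=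
  ∀ a b : R, a ∈ peirce11 e → b ∈ peirce22 e →
    (∀ m ∈ peirce12 e, lieBr (a + b) m = 0) → a + b ∈ ringCenter R

/-- Condition (ii): if `a₁₁ + a₂₂` commutes with every element of `R₂₁`, it is central. -/
def CondII {R : Type*} [NonUnitalNonAssocRing R] (e : R) : Prop :=
  ∀ a b : R, a ∈ peirce11 e → b ∈ peirce22 e →
    (∀ m ∈ peirce21 e, lieBr (a + b) m = 0) → a + b ∈ ringCenter R

/-- A map `φ` is Lie multiplicative if `φ [x,y] = [φ x, φ y]`. -/
def IsLieMultiplicative {R R' : Type*} [NonUnitalNonAssocRing R] [NonUnitalNonAssocRing R']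
    (φ : R → R') : Prop :=
  ∀ x y : R, φ (lieBr x y) = lieBr (φ x) (φ y)

/-- A map `D` is Lie triple derivable if
`D [[x,y],z] = [[D x,y],z] + [[x,D y],z] + [[x,y],D z]`. -/
def IsLieTripleDerivable {R : Type*} [NonUnitalNonAssocRing R] (D : R → R) : Prop :=
  ∀ x y z : R, D (lieBr (lieBr x y) z) =
    lieBr (lieBr (D x) y) z + lieBr (lieBr x (D y)) z + lieBr (lieBr x y) (D z)

/-- A map `D` is Lie derivable if `D [x,y] = [D x, y] + [x, D y]`. -/
def IsLieDerivable {R : Type*} [NonUnitalNonAssocRing R] (D : R → R) : Prop :=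
  ∀ x y : R, D (lieBr x y) = lieBr (D x) y + lieBr x (D y)

/-- `I` is a two-sided ideal (as a set) of the not-necessarily-associative ring `R`. -/
def IsTwoSidedIdealSet {R : Type*} [NonUnitalNonAssocRing R] (I : Set R) : Prop :=
  (0 : R) ∈ I ∧ (∀ a b : R, a ∈ I → b ∈ I → a + b ∈ I) ∧ (∀ a : R, a ∈ I → -a ∈ I) ∧
  (∀ r a : R, a ∈ I → r * a ∈ I ∧ a * r ∈ I)

/-- `R` is prime: for any two nonzero two-sided ideals `A`, `B`, some product `a*b` with
`a ∈ A`, `b ∈ B` is nonzero (i.e. `A·B ≠ 0`). -/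
def IsPrimeRing (R : Type*) [NonUnitalNonAssocRing R] : Prop :=
  ∀ A B : Set R, IsTwoSidedIdealSet A → IsTwoSidedIdealSet B → A ≠ {0} → B ≠ {0} →
    ∃ a ∈ A, ∃ b ∈ B, a * b ≠ 0

/-- `R` is 3-torsion free: `3x = 0` implies `x = 0`. -/
def ThreeTorsionFree (R : Type*) [NonUnitalNonAssocRing R] : Prop :=
  ∀ x : R, x + x + x = 0 → x = 0

namespace AltP
variable {R : Type*} [NonUnitalNonAssocRing R]

def aso (x y z : R) : R := x*y*z - x*(y*z)

lemma aso_add1 (x y z w : R) : aso (x+y) z w = aso x z w + aso y z w := by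
  simp only [aso, add_mul, mul_add]; abel
lemma aso_add2 (x y z w : R) : aso x (y+z) w = aso x y w + aso x z w := by
  simp only [aso, add_mul, mul_add]; abel
lemma aso_add3 (x y z w : R) : aso x y (z+w) = aso x y z + aso x y w := by
  simp only [aso, add_mul, mul_add]; abel

variable (hA : IsAlternative R)
include hA

lemma aso_ll (x z : R) : aso x x z = 0 := sub_eq_zero_of_eq (hA.1 x z)
lemma aso_rr (x z : R) : aso z x x = 0 := sub_eq_zero_of_eq (hA.2 x z)

lemma aso_12 (x y z : R) : aso y x z = - aso x y z := by
  have h0 := aso_ll hA (x+y) z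
  rw [aso_add1, aso_add2, aso_add2, aso_ll hA x z, aso_ll hA y z] at h0
  simp only [zero_add, add_zero] at h0
  exact eq_neg_of_add_eq_zero_right h0

lemma aso_23 (x y z : R) : aso x z y = - aso x y z := by
  have h0 := aso_rr hA (y+z) x
  rw [aso_add2, aso_add3, aso_add3, aso_rr hA y x, aso_rr hA z x] at h0
  simp only [zero_add, add_zero] at h0
  exact eq_neg_of_add_eq_zero_right h0

lemma aso_cyc (x y z : R) : aso x y z = aso y z x := by
  rw [show aso y z x = - aso y x z from aso_23 hA y x z,
      show aso y x z = - aso x y z from aso_12 hA x y z]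
  simp

section Table
variable {e : R}

omit hA in
lemma lmul_of_aso_zero {x y : R} (h : aso e x y = 0) : e*(x*y) = e*x*y := by
  simp only [aso, sub_eq_zero] at h; exact h.symm

omit hA in
lemma rmul_of_aso_zero {x y : R} (h : aso x y e = 0) : x*y*e = x*(y*e) := by
  simp only [aso, sub_eq_zero] at h; exact h

lemma mem_11_11 {x y : R} (hx : x ∈ peirce11 e) (hy : y ∈ peirce11 e) :
    x*y ∈ peirce11 e := by
  have hα : aso x e y = 0 := by simp [aso, hx.2, hy.1]
  have h1 : aso e x y = 0 := by rw [aso_12 hA x e y, hα, neg_zero]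
  have h2 : aso x y e = 0 := by rw [aso_23 hA x e y, hα, neg_zero]
  constructor
  · rw [lmul_of_aso_zero h1, hx.1]
  · rw [rmul_of_aso_zero h2, hy.2]

lemma mem_11_12 {x y : R} (hx : x ∈ peirce11 e) (hy : y ∈ peirce12 e) :
    x*y ∈ peirce12 e := by
  have hα : aso x e y = 0 := by simp [aso, hx.2, hy.1]
  have h1 : aso e x y = 0 := by rw [aso_12 hA x e y, hα, neg_zero]
  have h2 : aso x y e = 0 := by rw [aso_23 hA x e y, hα, neg_zero]
  constructor
  · rw [lmul_of_aso_zero h1, hx.1]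
  · rw [rmul_of_aso_zero h2, hy.2, mul_zero]

lemma mem_12_22 {x y : R} (hx : x ∈ peirce12 e) (hy : y ∈ peirce22 e) :
    x*y ∈ peirce12 e := by
  have hα : aso x e y = 0 := by simp [aso, hx.2, hy.1]
  have h1 : aso e x y = 0 := by rw [aso_12 hA x e y, hα, neg_zero]
  have h2 : aso x y e = 0 := by rw [aso_23 hA x e y, hα, neg_zero]
  constructor
  · rw [lmul_of_aso_zero h1, hx.1]
  · rw [rmul_of_aso_zero h2, hy.2, mul_zero]

lemma mem_12_21 {x y : R} (hx : x ∈ peirce12 e) (hy : y ∈ peirce21 e) :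
    x*y ∈ peirce11 e := by
  have hα : aso x e y = 0 := by simp [aso, hx.2, hy.1]
  have h1 : aso e x y = 0 := by rw [aso_12 hA x e y, hα, neg_zero]
  have h2 : aso x y e = 0 := by rw [aso_23 hA x e y, hα, neg_zero]
  constructor
  · rw [lmul_of_aso_zero h1, hx.1]
  · rw [rmul_of_aso_zero h2, hy.2]

lemma mem_21_11 {x y : R} (hx : x ∈ peirce21 e) (hy : y ∈ peirce11 e) :
    x*y ∈ peirce21 e := by
  have hα : aso x e y = 0 := by simp [aso, hx.2, hy.1]
  have h1 : aso e x y = 0 := by rw [aso_12 hA x e y, hα, neg_zero]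
  have h2 : aso x y e = 0 := by rw [aso_23 hA x e y, hα, neg_zero]
  constructor
  · rw [lmul_of_aso_zero h1, hx.1, zero_mul]
  · rw [rmul_of_aso_zero h2, hy.2]

lemma mem_21_12 {x y : R} (hx : x ∈ peirce21 e) (hy : y ∈ peirce12 e) :
    x*y ∈ peirce22 e := by
  have hα : aso x e y = 0 := by simp [aso, hx.2, hy.1]
  have h1 : aso e x y = 0 := by rw [aso_12 hA x e y, hα, neg_zero]
  have h2 : aso x y e = 0 := by rw [aso_23 hA x e y, hα, neg_zero]
  constructor
  · rw [lmul_of_aso_zero h1, hx.1, zero_mul]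
  · rw [rmul_of_aso_zero h2, hy.2, mul_zero]

lemma mem_22_22 {x y : R} (hx : x ∈ peirce22 e) (hy : y ∈ peirce22 e) :
    x*y ∈ peirce22 e := by
  have hα : aso x e y = 0 := by simp [aso, hx.2, hy.1]
  have h1 : aso e x y = 0 := by rw [aso_12 hA x e y, hα, neg_zero]
  have h2 : aso x y e = 0 := by rw [aso_23 hA x e y, hα, neg_zero]
  constructor
  · rw [lmul_of_aso_zero h1, hx.1, zero_mul]
  · rw [rmul_of_aso_zero h2, hy.2, mul_zero]

lemma mem_22_21 {x y : R} (hx : x ∈ peirce22 e) (hy : y ∈ peirce21 e) :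
    x*y ∈ peirce21 e := by
  have hα : aso x e y = 0 := by simp [aso, hx.2, hy.1]
  have h1 : aso e x y = 0 := by rw [aso_12 hA x e y, hα, neg_zero]
  have h2 : aso x y e = 0 := by rw [aso_23 hA x e y, hα, neg_zero]
  constructor
  · rw [lmul_of_aso_zero h1, hx.1, zero_mul]
  · rw [rmul_of_aso_zero h2, hy.2]

lemma mem_12_12 {x y : R} (hx : x ∈ peirce12 e) (hy : y ∈ peirce12 e) :
    x*y ∈ peirce21 e := by
  have hα : aso x e y = -(x*y) := by simp [aso, hx.2, hy.1]
  have h1 : aso e x y = x*y := by rw [aso_12 hA x e y, hα, neg_neg]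
  have h2 : aso x y e = x*y := by rw [aso_23 hA x e y, hα, neg_neg]
  constructor
  · simp only [aso] at h1
    rw [hx.1] at h1
    exact sub_eq_self.mp h1
  · simp only [aso] at h2
    rw [hy.2, mul_zero, sub_zero] at h2
    exact h2

lemma mem_21_21 {x y : R} (hx : x ∈ peirce21 e) (hy : y ∈ peirce21 e) :
    x*y ∈ peirce12 e := by
  have hα : aso x e y = x*y := by simp [aso, hx.2, hy.1]
  have h1 : aso e x y = -(x*y) := by rw [aso_12 hA x e y, hα]
  have h2 : aso x y e = -(x*y) := by rw [aso_23 hA x e y, hα]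
  constructor
  · simp only [aso] at h1
    rw [hx.1, zero_mul, zero_sub, neg_inj] at h1
    exact h1
  · simp only [aso] at h2
    rw [hy.2, sub_eq_iff_eq_add] at h2
    rw [h2, neg_add_cancel]

lemma zero_12_11 {x y : R} (hx : x ∈ peirce12 e) (hy : y ∈ peirce11 e) :
    x*y = 0 := by
  have hα : aso x e y = -(x*y) := by simp [aso, hx.2, hy.1]
  have hβ : aso y e x = 0 := by simp [aso, hy.2, hx.1]
  have h2 : aso x y e = x*y := by rw [aso_23 hA x e y, hα, neg_neg]
  have h3 : aso x y e = 0 := by rw [aso_cyc hA x y e, hβ]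
  rw [h2] at h3; exact h3

lemma zero_11_21 {x y : R} (hx : x ∈ peirce11 e) (hy : y ∈ peirce21 e) :
    x*y = 0 := by
  have hα : aso x e y = x*y := by simp [aso, hx.2, hy.1]
  have hβ : aso y e x = 0 := by simp [aso, hy.2, hx.1]
  have h2 : aso x y e = -(x*y) := by rw [aso_23 hA x e y, hα]
  have h3 : aso x y e = 0 := by rw [aso_cyc hA x y e, hβ]
  rw [h2] at h3; exact neg_eq_zero.mp h3

lemma zero_22_12 {x y : R} (hx : x ∈ peirce22 e) (hy : y ∈ peirce12 e) :
    x*y = 0 := by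
  have hα : aso x e y = -(x*y) := by simp [aso, hx.2, hy.1]
  have hβ : aso y e x = 0 := by simp [aso, hy.2, hx.1]
  have h2 : aso x y e = x*y := by rw [aso_23 hA x e y, hα, neg_neg]
  have h3 : aso x y e = 0 := by rw [aso_cyc hA x y e, hβ]
  rw [h2] at h3; exact h3

lemma zero_21_22 {x y : R} (hx : x ∈ peirce21 e) (hy : y ∈ peirce22 e) :
    x*y = 0 := by
  have hα : aso x e y = x*y := by simp [aso, hx.2, hy.1]
  have hβ : aso y e x = 0 := by simp [aso, hy.2, hx.1]
  have h2 : aso x y e = -(x*y) := by rw [aso_23 hA x e y, hα]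
  have h3 : aso x y e = 0 := by rw [aso_cyc hA x y e, hβ]
  rw [h2] at h3; exact neg_eq_zero.mp h3

lemma zero_11_22' {x y : R} (htf : ThreeTorsionFree R)
    (hx : x ∈ peirce11 e) (hy : y ∈ peirce22 e) : x*y = 0 ∧ y*x = 0 := by
  have hα : aso x e y = x*y := by simp [aso, hx.2, hy.1]
  have hβ : aso y e x = -(y*x) := by simp [aso, hy.2, hx.1]
  -- x*y = y*x
  have h2 : aso x y e = -(x*y) := by rw [aso_23 hA x e y, hα]
  have h3 : aso x y e = -(y*x) := by rw [aso_cyc hA x y e, hβ]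
  have hq : x*y = y*x := by rw [h2] at h3; exact neg_inj.mp h3
  -- r1 : x*y - e*(x*y) = -(x*y)
  have r1 : x*y - e*(x*y) = -(x*y) := by
    have h1 : aso e x y = -(x*y) := by rw [aso_12 hA x e y, hα]
    simp only [aso] at h1
    rw [hx.1] at h1
    exact h1
  -- r2 : e*(y*x) = -(y*x)
  have r2 : e*(y*x) = -(y*x) := by
    have h := aso_12 hA y e x
    rw [hβ, neg_neg] at h
    simp only [aso] at h
    rw [hy.1, zero_mul, zero_sub] at h
    exact neg_eq_iff_eq_neg.mp h
  have r2' : e*(x*y) = -(x*y) := by rw [hq]; exact r2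
  rw [r2', sub_neg_eq_add] at r1
  have r3 : x*y + x*y + x*y = 0 := by rw [r1, neg_add_cancel]
  have hxy := htf _ r3
  exact ⟨hxy, by rw [← hq]; exact hxy⟩

lemma zero_11_22 {x y : R} (htf : ThreeTorsionFree R)
    (hx : x ∈ peirce11 e) (hy : y ∈ peirce22 e) : x*y = 0 :=
  (zero_11_22' hA htf hx hy).1

lemma zero_22_11 {x y : R} (htf : ThreeTorsionFree R)
    (hx : x ∈ peirce22 e) (hy : y ∈ peirce11 e) : x*y = 0 :=
  (zero_11_22' hA htf hy hx).2

end Table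

section Comp
variable {e : R}

omit hA in
lemma p_zero_helper : True := trivial

def p11 (e x : R) : R := e*(x*e)
def p12 (e x : R) : R := e*x - e*(x*e)
def p21 (e x : R) : R := x*e - e*(x*e)
def p22 (e x : R) : R := x - e*x - x*e + e*(x*e)

lemma e_mul_e_mul (he : e*e = e) (w : R) : e*(e*w) = e*w := by
  have h := aso_ll hA e w
  simp only [aso, sub_eq_zero, he] at h
  exact h.symm

lemma mul_e_mul_e (he : e*e = e) (w : R) : (w*e)*e = w*e := by
  have h := aso_rr hA e w
  simp only [aso, sub_eq_zero, he] at h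
  exact h

lemma flex_e (w : R) : (e*w)*e = e*(w*e) := by
  have h : aso e w e = 0 := by rw [aso_23 hA e e w, aso_ll hA e w, neg_zero]
  simp only [aso, sub_eq_zero] at h
  exact h

lemma hp11 (he : e*e = e) (x : R) : p11 e x ∈ peirce11 e := by
  refine ⟨e_mul_e_mul hA he (x*e), ?_⟩
  rw [p11, flex_e hA (x*e), mul_e_mul_e hA he x]

lemma hp12 (he : e*e = e) (x : R) : p12 e x ∈ peirce12 e := by
  constructor
  · rw [p12, mul_sub, e_mul_e_mul hA he x, e_mul_e_mul hA he (x*e)]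
  · rw [p12, sub_mul, flex_e hA x, flex_e hA (x*e), mul_e_mul_e hA he x, sub_self]

lemma hp21 (he : e*e = e) (x : R) : p21 e x ∈ peirce21 e := by
  constructor
  · rw [p21, mul_sub, e_mul_e_mul hA he (x*e), sub_self]
  · rw [p21, sub_mul, mul_e_mul_e hA he x, flex_e hA (x*e), mul_e_mul_e hA he x]

lemma hp22 (he : e*e = e) (x : R) : p22 e x ∈ peirce22 e := by
  constructor
  · rw [p22]
    rw [mul_add, mul_sub, mul_sub, e_mul_e_mul hA he x, e_mul_e_mul hA he (x*e)]
    abel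
  · rw [p22]
    rw [add_mul, sub_mul, sub_mul, flex_e hA x, flex_e hA (x*e), mul_e_mul_e hA he x]
    abel

omit hA in
lemma psum (x : R) : x = p11 e x + p12 e x + p21 e x + p22 e x := by
  simp only [p11, p12, p21, p22]; abel

omit hA in
lemma p11_add (x y : R) : p11 e (x+y) = p11 e x + p11 e y := by
  simp only [p11, add_mul, mul_add]

omit hA in
lemma p22_add (x y : R) : p22 e (x+y) = p22 e x + p22 e y := by
  simp only [p22, add_mul, mul_add]; abel

omit hA in
lemma p11_zero : p11 e (0 : R) = 0 := by simp [p11]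

omit hA in
lemma p22_zero : p22 e (0 : R) = 0 := by simp [p22]

omit hA in
lemma p11_of_11 {x : R} (hx : x ∈ peirce11 e) : p11 e x = x := by
  rw [p11, hx.2, hx.1]
omit hA in
lemma p11_of_12 {x : R} (hx : x ∈ peirce12 e) : p11 e x = 0 := by
  rw [p11, hx.2, mul_zero]
omit hA in
lemma p11_of_21 {x : R} (hx : x ∈ peirce21 e) : p11 e x = 0 := by
  rw [p11, hx.2, hx.1]
omit hA in
lemma p11_of_22 {x : R} (hx : x ∈ peirce22 e) : p11 e x = 0 := by
  rw [p11, hx.2, mul_zero]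
omit hA in
lemma p22_of_11 {x : R} (hx : x ∈ peirce11 e) : p22 e x = 0 := by
  rw [p22, hx.2, hx.1]; abel
omit hA in
lemma p22_of_12 {x : R} (hx : x ∈ peirce12 e) : p22 e x = 0 := by
  rw [p22, hx.2, hx.1, mul_zero]; abel
omit hA in
lemma p22_of_21 {x : R} (hx : x ∈ peirce21 e) : p22 e x = 0 := by
  rw [p22, hx.2, hx.1]; abel
omit hA in
lemma p22_of_22 {x : R} (hx : x ∈ peirce22 e) : p22 e x = x := by
  rw [p22, hx.2, hx.1, mul_zero]; abel

lemma p11_mul' (htf : ThreeTorsionFree R) {x11 x12 x21 x22 y11 y12 y21 y22 : R}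
    (hx11 : x11 ∈ peirce11 e) (hx12 : x12 ∈ peirce12 e)
    (hx21 : x21 ∈ peirce21 e) (hx22 : x22 ∈ peirce22 e)
    (hy11 : y11 ∈ peirce11 e) (hy12 : y12 ∈ peirce12 e)
    (hy21 : y21 ∈ peirce21 e) (hy22 : y22 ∈ peirce22 e) :
    p11 e ((x11+x12+x21+x22)*(y11+y12+y21+y22)) = x11*y11 + x12*y21 := by
  have t1 : p11 e (x11*y11) = x11*y11 := p11_of_11 (mem_11_11 hA hx11 hy11)
  have t2 : p11 e (x11*y12) = 0 := p11_of_12 (mem_11_12 hA hx11 hy12)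
  have t3 : x11*y21 = 0 := zero_11_21 hA hx11 hy21
  have t4 : x11*y22 = 0 := zero_11_22 hA htf hx11 hy22
  have t5 : x12*y11 = 0 := zero_12_11 hA hx12 hy11
  have t6 : p11 e (x12*y12) = 0 := p11_of_21 (mem_12_12 hA hx12 hy12)
  have t7 : p11 e (x12*y21) = x12*y21 := p11_of_11 (mem_12_21 hA hx12 hy21)
  have t8 : p11 e (x12*y22) = 0 := p11_of_12 (mem_12_22 hA hx12 hy22)
  have t9 : p11 e (x21*y11) = 0 := p11_of_21 (mem_21_11 hA hx21 hy11)
  have t10 : p11 e (x21*y12) = 0 := p11_of_22 (mem_21_12 hA hx21 hy12)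
  have t11 : p11 e (x21*y21) = 0 := p11_of_12 (mem_21_21 hA hx21 hy21)
  have t12 : x21*y22 = 0 := zero_21_22 hA hx21 hy22
  have t13 : x22*y11 = 0 := zero_22_11 hA htf hx22 hy11
  have t14 : x22*y12 = 0 := zero_22_12 hA hx22 hy12
  have t15 : p11 e (x22*y21) = 0 := p11_of_21 (mem_22_21 hA hx22 hy21)
  have t16 : p11 e (x22*y22) = 0 := p11_of_22 (mem_22_22 hA hx22 hy22)
  simp only [add_mul, mul_add, p11_add, t1, t2, t3, t4, t5, t6, t7, t8, t9, t10,
    t11, t12, t13, t14, t15, t16, p11_zero]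
  abel

lemma p22_mul' (htf : ThreeTorsionFree R) {x11 x12 x21 x22 y11 y12 y21 y22 : R}
    (hx11 : x11 ∈ peirce11 e) (hx12 : x12 ∈ peirce12 e)
    (hx21 : x21 ∈ peirce21 e) (hx22 : x22 ∈ peirce22 e)
    (hy11 : y11 ∈ peirce11 e) (hy12 : y12 ∈ peirce12 e)
    (hy21 : y21 ∈ peirce21 e) (hy22 : y22 ∈ peirce22 e) :
    p22 e ((x11+x12+x21+x22)*(y11+y12+y21+y22)) = x21*y12 + x22*y22 := by
  have t1 : p22 e (x11*y11) = 0 := p22_of_11 (mem_11_11 hA hx11 hy11)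
  have t2 : p22 e (x11*y12) = 0 := p22_of_12 (mem_11_12 hA hx11 hy12)
  have t3 : x11*y21 = 0 := zero_11_21 hA hx11 hy21
  have t4 : x11*y22 = 0 := zero_11_22 hA htf hx11 hy22
  have t5 : x12*y11 = 0 := zero_12_11 hA hx12 hy11
  have t6 : p22 e (x12*y12) = 0 := p22_of_21 (mem_12_12 hA hx12 hy12)
  have t7 : p22 e (x12*y21) = 0 := p22_of_11 (mem_12_21 hA hx12 hy21)
  have t8 : p22 e (x12*y22) = 0 := p22_of_12 (mem_12_22 hA hx12 hy22)
  have t9 : p22 e (x21*y11) = 0 := p22_of_21 (mem_21_11 hA hx21 hy11)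
  have t10 : p22 e (x21*y12) = x21*y12 := p22_of_22 (mem_21_12 hA hx21 hy12)
  have t11 : p22 e (x21*y21) = 0 := p22_of_12 (mem_21_21 hA hx21 hy21)
  have t12 : x21*y22 = 0 := zero_21_22 hA hx21 hy22
  have t13 : x22*y11 = 0 := zero_22_11 hA htf hx22 hy11
  have t14 : x22*y12 = 0 := zero_22_12 hA hx22 hy12
  have t15 : p22 e (x22*y21) = 0 := p22_of_21 (mem_22_21 hA hx22 hy21)
  have t16 : p22 e (x22*y22) = x22*y22 := p22_of_22 (mem_22_22 hA hx22 hy22)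
  simp only [add_mul, mul_add, p22_add, t1, t2, t3, t4, t5, t6, t7, t8, t9, t10,
    t11, t12, t13, t14, t15, t16, p22_zero]
  abel

end Comp

section LA
variable (hA : IsAlternative R)
include hA

variable {e : R}

def Wset (e : R) : Set R := {w | w ∈ peirce11 e ∧ ∀ m ∈ peirce12 e, w*m = 0}
def NW (e : R) : Set R := {y | ∃ n ∈ peirce21 e, ∃ w ∈ Wset e, y = n*w}
def Dgrp (e : R) : AddSubgroup R := AddSubgroup.closure (Wset e ∪ NW e)

omit hA in
lemma p11_neg (x : R) : p11 e (-x) = - p11 e x := by simp [p11]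
omit hA in
lemma p12_neg (x : R) : p12 e (-x) = - p12 e x := by simp [p12]; abel
omit hA in
lemma p21_neg (x : R) : p21 e (-x) = - p21 e x := by simp [p21]; abel
omit hA in
lemma p22_neg (x : R) : p22 e (-x) = - p22 e x := by simp [p22]; abel

-- F1 : W * P11 ⊆ W
lemma WF1 {w r : R} (hw : w ∈ Wset e) (hr : r ∈ peirce11 e) : w*r ∈ Wset e := by
  refine ⟨mem_11_11 hA hw.1 hr, fun m hm => ?_⟩
  have ha : aso w r m = 0 := by
    rw [aso_cyc hA w r m]
    simp only [aso]
    rw [zero_12_11 hA (mem_11_12 hA hr hm) hw.1,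
        zero_12_11 hA hm hw.1, mul_zero, sub_zero]
  simp only [aso, sub_eq_zero] at ha
  rw [ha, hw.2 _ (mem_11_12 hA hr hm)]

-- F2 : P11 * W ⊆ W
lemma WF2 {w r : R} (hw : w ∈ Wset e) (hr : r ∈ peirce11 e) : r*w ∈ Wset e := by
  refine ⟨mem_11_11 hA hr hw.1, fun m hm => ?_⟩
  have ha : aso w r m = 0 := by
    rw [aso_cyc hA w r m]
    simp only [aso]
    rw [zero_12_11 hA (mem_11_12 hA hr hm) hw.1,
        zero_12_11 hA hm hw.1, mul_zero, sub_zero]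
  have hb : aso r w m = 0 := by rw [aso_12 hA w r m, ha, neg_zero]
  simp only [aso, sub_eq_zero] at hb
  rw [hb, hw.2 _ hm, mul_zero]

-- F3 : w * (m*n) = 0
lemma WF3 {w m n : R} (hw : w ∈ Wset e) (hm : m ∈ peirce12 e) (hn : n ∈ peirce21 e) :
    w*(m*n) = 0 := by
  have hb : aso m w n = 0 := by
    simp only [aso]
    rw [zero_12_11 hA hm hw.1, zero_11_21 hA hw.1 hn, mul_zero, zero_mul, sub_zero]
  have ha : aso w m n = 0 := by rw [aso_12 hA m w n, hb, neg_zero]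
  simp only [aso, sub_eq_zero] at ha
  rw [← ha, hw.2 _ hm, zero_mul]

-- aso w n m = 0  (helper for F4/F8)
lemma WF4a (htf : ThreeTorsionFree R) {w m n : R} (hw : w ∈ Wset e)
    (hm : m ∈ peirce12 e) (hn : n ∈ peirce21 e) : aso w n m = 0 := by
  simp only [aso]
  rw [zero_11_21 hA hw.1 hn, zero_mul,
      zero_11_22 hA htf hw.1 (mem_21_12 hA hn hm), sub_zero]

-- F4 : (n*w)*m = 0
lemma WF4 (htf : ThreeTorsionFree R) {w m n : R} (hw : w ∈ Wset e)
    (hm : m ∈ peirce12 e) (hn : n ∈ peirce21 e) : (n*w)*m = 0 := by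
  have hb : aso n w m = 0 := by
    rw [aso_12 hA w n m, WF4a hA htf hw hm hn, neg_zero]
  simp only [aso, sub_eq_zero] at hb
  rw [hb, hw.2 _ hm, mul_zero]

-- F5 : (n*w)*r = n*(w*r)
lemma WF5 {w r n : R} (hw : w ∈ Wset e) (hr : r ∈ peirce11 e) (hn : n ∈ peirce21 e) :
    (n*w)*r = n*(w*r) := by
  have ha : aso w n r = 0 := by
    simp only [aso]
    rw [zero_11_21 hA hw.1 hn, zero_mul,
        zero_11_21 hA hw.1 (mem_21_11 hA hn hr), sub_zero]
  have hb : aso n w r = 0 := by rw [aso_12 hA w n r, ha, neg_zero]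
  simp only [aso, sub_eq_zero] at hb
  exact hb

-- helper : aso w n n' = 0
lemma WF6a {w n n' : R} (hw : w ∈ Wset e) (hn : n ∈ peirce21 e) (hn' : n' ∈ peirce21 e) :
    aso w n n' = 0 := by
  simp only [aso]
  rw [zero_11_21 hA hw.1 hn, zero_mul, hw.2 _ (mem_21_21 hA hn hn'), sub_zero]

-- F6 : (n*w)*n' = 0
lemma WF6 {w n n' : R} (hw : w ∈ Wset e) (hn : n ∈ peirce21 e) (hn' : n' ∈ peirce21 e) :
    (n*w)*n' = 0 := by
  have hb : aso n w n' = 0 := by rw [aso_12 hA w n n', WF6a hA hw hn hn', neg_zero]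
  simp only [aso, sub_eq_zero] at hb
  rw [hb, zero_11_21 hA hw.1 hn', mul_zero]

-- F8 : m*(n*w) = (m*n)*w
lemma WF8 (htf : ThreeTorsionFree R) {w m n : R} (hw : w ∈ Wset e)
    (hm : m ∈ peirce12 e) (hn : n ∈ peirce21 e) : m*(n*w) = (m*n)*w := by
  have ha : aso m n w = 0 := by
    rw [aso_cyc hA m n w, aso_12 hA w n m, WF4a hA htf hw hm hn, neg_zero]
  simp only [aso, sub_eq_zero] at ha
  exact ha.symm

-- F9 : n'*(n*w) = 0
lemma WF9 {w n n' : R} (hw : w ∈ Wset e) (hn : n ∈ peirce21 e) (hn' : n' ∈ peirce21 e) :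
    n'*(n*w) = 0 := by
  have ha : aso n' n w = 0 := by
    rw [aso_cyc hA n' n w, aso_12 hA w n n', WF6a hA hw hn hn', neg_zero]
  simp only [aso, sub_eq_zero] at ha
  rw [← ha, zero_12_11 hA (mem_21_21 hA hn' hn) hw.1]

-- F10 : s*(n*w) = (s*n)*w
lemma WF10 (htf : ThreeTorsionFree R) {w n s : R} (hw : w ∈ Wset e)
    (hn : n ∈ peirce21 e) (hs : s ∈ peirce22 e) : s*(n*w) = (s*n)*w := by
  have ha : aso s n w = 0 := by
    rw [aso_cyc hA s n w]
    simp only [aso]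
    rw [zero_21_22 hA (mem_21_11 hA hn hw.1) hs,
        zero_11_22 hA htf hw.1 hs, mul_zero, sub_zero]
  simp only [aso, sub_eq_zero] at ha
  exact ha.symm


-- F12 : kill-set closure inside P11
lemma WF12 {w r x : R} (hw : w ∈ Wset e) (hr : r ∈ peirce11 e) (hx : x ∈ peirce11 e)
    (hkx : ∀ w' ∈ Wset e, w' * x = 0) : w*(x*r) = 0 ∧ w*(r*x) = 0 := by
  have ha : aso w r x = 0 := by
    rw [aso_12 hA r w x]
    simp only [aso]
    rw [hkx _ (WF2 hA hw hr), hkx _ hw, mul_zero, sub_zero, neg_zero]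
  constructor
  · have hb : aso w x r = 0 := by rw [aso_23 hA w r x, ha, neg_zero]
    simp only [aso, sub_eq_zero] at hb
    rw [← hb, hkx _ hw, zero_mul]
  · simp only [aso, sub_eq_zero] at ha
    rw [← ha, hkx _ (WF1 hA hw hr)]

lemma memD_W {w : R} (hw : w ∈ Wset e) : w ∈ Dgrp e :=
  AddSubgroup.subset_closure (Or.inl hw)

lemma memD_NW {n w : R} (hn : n ∈ peirce21 e) (hw : w ∈ Wset e) : n*w ∈ Dgrp e :=
  AddSubgroup.subset_closure (Or.inr ⟨n, hn, w, hw, rfl⟩)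

-- generators are multiplicatively absorbed
lemma D_gen_mul (htf : ThreeTorsionFree R) (he : e*e = e)
    {g : R} (hg : g ∈ Wset e ∪ NW e) (y : R) :
    g*y ∈ Dgrp e ∧ y*g ∈ Dgrp e := by
  have h11 := hp11 hA he y
  have h12 := hp12 hA he y
  have h21 := hp21 hA he y
  have h22 := hp22 hA he y
  rcases hg with hw | ⟨n, hn, w, hw, rfl⟩
  · constructor
    · have hgy : g*y = g*(p11 e y) := by
        conv_lhs => rw [psum (e := e) y]
        rw [mul_add, mul_add, mul_add, hw.2 _ h12, zero_11_21 hA hw.1 h21,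
            zero_11_22 hA htf hw.1 h22]
        abel
      rw [hgy]
      exact memD_W hA (WF1 hA hw h11)
    · have hyg : y*g = (p11 e y)*g + (p21 e y)*g := by
        conv_lhs => rw [psum (e := e) y]
        rw [add_mul, add_mul, add_mul, zero_12_11 hA h12 hw.1,
            zero_22_11 hA htf h22 hw.1]
        abel
      rw [hyg]
      exact AddSubgroup.add_mem _ (memD_W hA (WF2 hA hw h11)) (memD_NW hA h21 hw)
  · constructor
    · have hgy : (n*w)*y = n*(w*(p11 e y)) := by
        conv_lhs => rw [psum (e := e) y]
        rw [mul_add, mul_add, mul_add, WF4 hA htf hw h12 hn, WF6 hA hw hn h21,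
            zero_21_22 hA (mem_21_11 hA hn hw.1) h22, WF5 hA hw h11 hn]
        abel
      rw [hgy]
      exact memD_NW hA hn (WF1 hA hw h11)
    · have hyg : y*(n*w) = ((p12 e y)*n)*w + ((p22 e y)*n)*w := by
        conv_lhs => rw [psum (e := e) y]
        rw [add_mul, add_mul, add_mul, zero_11_21 hA h11 (mem_21_11 hA hn hw.1),
            WF9 hA hw hn h21, WF8 hA htf hw h12 hn, WF10 hA htf hw hn h22]
        abel
      rw [hyg]
      exact AddSubgroup.add_mem _
        (memD_W hA (WF2 hA hw (mem_12_21 hA h12 hn)))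
        (memD_NW hA (mem_22_21 hA h22 hn) hw)

lemma D_mul (htf : ThreeTorsionFree R) (he : e*e = e)
    {d : R} (hd : d ∈ Dgrp e) (y : R) : d*y ∈ Dgrp e ∧ y*d ∈ Dgrp e := by
  induction hd using AddSubgroup.closure_induction with
  | mem g hg => exact D_gen_mul hA htf he hg y
  | zero =>
      constructor <;> simp only [zero_mul, mul_zero] <;> exact AddSubgroup.zero_mem _
  | add a b ha hb iha ihb =>
      constructor
      · rw [add_mul]; exact AddSubgroup.add_mem _ iha.1 ihb.1
      · rw [mul_add]; exact AddSubgroup.add_mem _ iha.2 ihb.2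
  | neg a ha iha =>
      constructor
      · rw [neg_mul]; exact AddSubgroup.neg_mem _ iha.1
      · rw [mul_neg]; exact AddSubgroup.neg_mem _ iha.2

def Kset (e : R) : Set R := {x | ∀ w ∈ Wset e, w * p11 e x = 0}

lemma D_kills_K (htf : ThreeTorsionFree R) (he : e*e = e)
    {d : R} (hd : d ∈ Dgrp e) {x : R} (hx : x ∈ Kset e) : d*x = 0 := by
  have h11 := hp11 hA he x
  have h12 := hp12 hA he x
  have h21 := hp21 hA he x
  have h22 := hp22 hA he x
  induction hd using AddSubgroup.closure_induction with
  | mem g hg =>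
      rcases hg with hw | ⟨n, hn, w, hw, rfl⟩
      · conv_lhs => rw [psum (e := e) x]
        rw [mul_add, mul_add, mul_add, hx _ hw, hw.2 _ h12,
            zero_11_21 hA hw.1 h21, zero_11_22 hA htf hw.1 h22]
        abel
      · conv_lhs => rw [psum (e := e) x]
        rw [mul_add, mul_add, mul_add, WF4 hA htf hw h12 hn, WF6 hA hw hn h21,
            zero_21_22 hA (mem_21_11 hA hn hw.1) h22, WF5 hA hw h11 hn,
            hx _ hw, mul_zero]
        abel
  | zero => rw [zero_mul]
  | add a b ha hb iha ihb => rw [add_mul, iha, ihb, add_zero]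
  | neg a ha iha => rw [neg_mul, iha, neg_zero]

lemma K_ideal (htf : ThreeTorsionFree R) (he : e*e = e) :
    IsTwoSidedIdealSet (Kset e) := by
  refine ⟨?_, ?_, ?_, ?_⟩
  · intro w hw; rw [p11_zero, mul_zero]
  · intro a b ha hb w hw
    rw [p11_add, mul_add, ha _ hw, hb _ hw, add_zero]
  · intro a ha w hw
    rw [p11_neg, mul_neg, ha _ hw, neg_zero]
  · intro r a ha
    have ha11 := hp11 hA he a
    have hr11 := hp11 hA he r
    have hKa : ∀ w' ∈ Wset e, w' * p11 e a = 0 := ha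
    constructor
    · intro w hw
      have hmul : p11 e (r*a) = p11 e r * p11 e a + p12 e r * p21 e a := by
        conv_lhs => rw [psum (e := e) r, psum (e := e) a]
        exact p11_mul' hA htf (hp11 hA he r) (hp12 hA he r) (hp21 hA he r)
          (hp22 hA he r) (hp11 hA he a) (hp12 hA he a) (hp21 hA he a) (hp22 hA he a)
      rw [hmul, mul_add, (WF12 hA hw hr11 ha11 hKa).2,
          WF3 hA hw (hp12 hA he r) (hp21 hA he a), add_zero]
    · intro w hw
      have hmul : p11 e (a*r) = p11 e a * p11 e r + p12 e a * p21 e r := by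
        conv_lhs => rw [psum (e := e) a, psum (e := e) r]
        exact p11_mul' hA htf (hp11 hA he a) (hp12 hA he a) (hp21 hA he a)
          (hp22 hA he a) (hp11 hA he r) (hp12 hA he r) (hp21 hA he r) (hp22 hA he r)
      rw [hmul, mul_add, (WF12 hA hw hr11 ha11 hKa).1,
          WF3 hA hw (hp12 hA he a) (hp21 hA he r), add_zero]

lemma D_ideal (htf : ThreeTorsionFree R) (he : e*e = e) :
    IsTwoSidedIdealSet ((Dgrp e : AddSubgroup R) : Set R) := by
  refine ⟨AddSubgroup.zero_mem _, ?_, ?_, ?_⟩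
  · intro a b ha hb; exact AddSubgroup.add_mem _ ha hb
  · intro a ha; exact AddSubgroup.neg_mem _ ha
  · intro r a ha
    have := D_mul hA htf he ha r
    exact ⟨this.2, this.1⟩

lemma LA (htf : ThreeTorsionFree R) (he : e*e = e) (hpr : IsPrimeRing R)
    (hm0 : ∃ m ∈ peirce12 e, m ≠ (0:R))
    {w : R} (hw : w ∈ Wset e) : w = 0 := by
  by_contra hw0
  obtain ⟨m0, hm0mem, hm0ne⟩ := hm0
  have hDne : ((Dgrp e : AddSubgroup R) : Set R) ≠ {0} := by
    intro h
    apply hw0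
    have hmem : w ∈ ((Dgrp e : AddSubgroup R) : Set R) := memD_W hA hw
    rw [h] at hmem
    exact hmem
  have hKne : Kset e ≠ {0} := by
    intro h
    have : m0 ∈ Kset e := by
      intro w' hw'
      rw [p11_of_12 hm0mem, mul_zero]
    rw [h] at this
    exact hm0ne this
  obtain ⟨d, hd, k, hk, hne⟩ := hpr _ _ (D_ideal hA htf he) (K_ideal hA htf he) hDne hKne
  exact hne (D_kills_K hA htf he hd hk)

end LA

section LB
variable (hA : IsAlternative R)
include hA
variable {e : R}

def W2set (e : R) : Set R := {w | w ∈ peirce22 e ∧ ∀ m ∈ peirce12 e, m*w = 0}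
def WN (e : R) : Set R := {y | ∃ w ∈ W2set e, ∃ n ∈ peirce21 e, y = w*n}
def D2grp (e : R) : AddSubgroup R := AddSubgroup.closure (W2set e ∪ WN e)
def K2set (e : R) : Set R := {x | ∀ w ∈ W2set e, p22 e x * w = 0}

-- G1 : P22 * W2 ⊆ W2
lemma VF1 {w s : R} (hw : w ∈ W2set e) (hs : s ∈ peirce22 e) : s*w ∈ W2set e := by
  refine ⟨mem_22_22 hA hs hw.1, fun m hm => ?_⟩
  have ha : aso m s w = 0 := by
    rw [aso_cyc hA m s w]
    simp only [aso]
    rw [zero_22_12 hA (mem_22_22 hA hs hw.1) hm, zero_22_12 hA hw.1 hm,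
        mul_zero, sub_zero]
  simp only [aso, sub_eq_zero] at ha
  rw [← ha, hw.2 _ (mem_12_22 hA hm hs)]

-- G2 : W2 * P22 ⊆ W2
lemma VF2 {w s : R} (hw : w ∈ W2set e) (hs : s ∈ peirce22 e) : w*s ∈ W2set e := by
  refine ⟨mem_22_22 hA hw.1 hs, fun m hm => ?_⟩
  have ha : aso m w s = 0 := by
    rw [aso_cyc hA m w s]
    simp only [aso]
    rw [zero_22_12 hA (mem_22_22 hA hw.1 hs) hm, zero_22_12 hA hs hm,
        mul_zero, sub_zero]
  simp only [aso, sub_eq_zero] at ha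
  rw [← ha, hw.2 _ hm, zero_mul]

-- G3 : (n*m)*w = 0
lemma VF3 {w m n : R} (hw : w ∈ W2set e) (hm : m ∈ peirce12 e) (hn : n ∈ peirce21 e) :
    (n*m)*w = 0 := by
  have hb : aso n w m = 0 := by
    simp only [aso]
    rw [zero_21_22 hA hn hw.1, zero_mul, zero_22_12 hA hw.1 hm, mul_zero, sub_zero]
  have ha : aso n m w = 0 := by rw [aso_23 hA n w m, hb, neg_zero]
  simp only [aso, sub_eq_zero] at ha
  rw [ha, hw.2 _ hm, mul_zero]

-- G4 : m*(w*n) = 0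
lemma VF4 (htf : ThreeTorsionFree R) {w m n : R} (hw : w ∈ W2set e)
    (hm : m ∈ peirce12 e) (hn : n ∈ peirce21 e) : m*(w*n) = 0 := by
  have hb : aso w m n = 0 := by
    simp only [aso]
    rw [zero_22_12 hA hw.1 hm, zero_mul,
        zero_22_11 hA htf hw.1 (mem_12_21 hA hm hn), sub_zero]
  have ha : aso m w n = 0 := by rw [aso_12 hA w m n, hb, neg_zero]
  simp only [aso, sub_eq_zero] at ha
  rw [← ha, hw.2 _ hm, zero_mul]

-- G5 : (w*n)*r = w*(n*r)
lemma VF5 (htf : ThreeTorsionFree R) {w r n : R} (hw : w ∈ W2set e)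
    (hr : r ∈ peirce11 e) (hn : n ∈ peirce21 e) : (w*n)*r = w*(n*r) := by
  have hb : aso n w r = 0 := by
    simp only [aso]
    rw [zero_21_22 hA hn hw.1, zero_mul, zero_22_11 hA htf hw.1 hr,
        mul_zero, sub_zero]
  have ha : aso w n r = 0 := by rw [aso_12 hA n w r, hb, neg_zero]
  simp only [aso, sub_eq_zero] at ha
  exact ha

-- helper : aso w n n' = 0 and (w*n)*n' = 0
lemma VF6a {w n n' : R} (hw : w ∈ W2set e) (hn : n ∈ peirce21 e) (hn' : n' ∈ peirce21 e) :
    aso w n n' = 0 := by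
  rw [aso_cyc hA w n n']
  simp only [aso]
  rw [hw.2 _ (mem_21_21 hA hn hn'), zero_21_22 hA hn' hw.1, mul_zero, sub_zero]

lemma VF6 {w n n' : R} (hw : w ∈ W2set e) (hn : n ∈ peirce21 e) (hn' : n' ∈ peirce21 e) :
    (w*n)*n' = 0 := by
  have ha := VF6a hA hw hn hn'
  simp only [aso, sub_eq_zero] at ha
  rw [ha, zero_22_12 hA hw.1 (mem_21_21 hA hn hn')]

-- G8 : s*(w*n) = (s*w)*n
lemma VF8 {w n s : R} (hw : w ∈ W2set e) (hn : n ∈ peirce21 e) (hs : s ∈ peirce22 e) :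
    s*(w*n) = (s*w)*n := by
  have ha : aso s w n = 0 := by
    rw [aso_cyc hA s w n]
    simp only [aso]
    rw [zero_21_22 hA (mem_22_21 hA hw.1 hn) hs, zero_21_22 hA hn hs,
        mul_zero, sub_zero]
  simp only [aso, sub_eq_zero] at ha
  exact ha.symm

-- G9 : n'*(w*n) = 0
lemma VF9 {w n n' : R} (hw : w ∈ W2set e) (hn : n ∈ peirce21 e) (hn' : n' ∈ peirce21 e) :
    n'*(w*n) = 0 := by
  have ha : aso n' w n = 0 := by
    rw [aso_cyc hA n' w n]
    exact VF6a hA hw hn hn'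
  simp only [aso, sub_eq_zero] at ha
  rw [← ha, zero_21_22 hA hn' hw.1, zero_mul]

-- G13 : (w*n)*m = w*(n*m)
lemma VF13 (htf : ThreeTorsionFree R) {w m n : R} (hw : w ∈ W2set e)
    (hm : m ∈ peirce12 e) (hn : n ∈ peirce21 e) : (w*n)*m = w*(n*m) := by
  have hb : aso w m n = 0 := by
    simp only [aso]
    rw [zero_22_12 hA hw.1 hm, zero_mul,
        zero_22_11 hA htf hw.1 (mem_12_21 hA hm hn), sub_zero]
  have ha : aso w n m = 0 := by rw [aso_23 hA w m n, hb, neg_zero]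
  simp only [aso, sub_eq_zero] at ha
  exact ha

-- G12 : kill-set closure inside P22
lemma VF12 {w s x : R} (hw : w ∈ W2set e) (hs : s ∈ peirce22 e) (hx : x ∈ peirce22 e)
    (hkx : ∀ w' ∈ W2set e, x * w' = 0) : (x*s)*w = 0 ∧ (s*x)*w = 0 := by
  have ha : aso x s w = 0 := by
    rw [aso_23 hA x w s]
    simp only [aso]
    rw [hkx _ hw, zero_mul, hkx _ (VF2 hA hw hs), sub_zero, neg_zero]
  constructor
  · simp only [aso, sub_eq_zero] at ha
    rw [ha, hkx _ (VF1 hA hw hs)]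
  · have hb : aso s x w = 0 := by rw [aso_12 hA x s w, ha, neg_zero]
    simp only [aso, sub_eq_zero] at hb
    rw [hb, hkx _ hw, mul_zero]

lemma memD2_W {w : R} (hw : w ∈ W2set e) : w ∈ D2grp e :=
  AddSubgroup.subset_closure (Or.inl hw)

lemma memD2_WN {n w : R} (hw : w ∈ W2set e) (hn : n ∈ peirce21 e) : w*n ∈ D2grp e :=
  AddSubgroup.subset_closure (Or.inr ⟨w, hw, n, hn, rfl⟩)

lemma D2_gen_mul (htf : ThreeTorsionFree R) (he : e*e = e)
    {g : R} (hg : g ∈ W2set e ∪ WN e) (y : R) :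
    g*y ∈ D2grp e ∧ y*g ∈ D2grp e := by
  have h11 := hp11 hA he y
  have h12 := hp12 hA he y
  have h21 := hp21 hA he y
  have h22 := hp22 hA he y
  rcases hg with hw | ⟨w, hw, n, hn, rfl⟩
  · constructor
    · have hgy : g*y = g*(p21 e y) + g*(p22 e y) := by
        conv_lhs => rw [psum (e := e) y]
        rw [mul_add, mul_add, mul_add, zero_22_11 hA htf hw.1 h11,
            zero_22_12 hA hw.1 h12]
        abel
      rw [hgy]
      exact AddSubgroup.add_mem _ (memD2_WN hA hw h21) (memD2_W hA (VF2 hA hw h22))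
    · have hyg : y*g = (p22 e y)*g := by
        conv_lhs => rw [psum (e := e) y]
        rw [add_mul, add_mul, add_mul, zero_11_22 hA htf h11 hw.1,
            hw.2 _ h12, zero_21_22 hA h21 hw.1]
        abel
      rw [hyg]
      exact memD2_W hA (VF1 hA hw h22)
  · constructor
    · have hgy : (w*n)*y = w*(n*(p11 e y)) + w*(n*(p12 e y)) := by
        conv_lhs => rw [psum (e := e) y]
        rw [mul_add, mul_add, mul_add, VF5 hA htf hw h11 hn, VF13 hA htf hw h12 hn,
            VF6 hA hw hn h21, zero_21_22 hA (mem_22_21 hA hw.1 hn) h22]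
        abel
      rw [hgy]
      exact AddSubgroup.add_mem _
        (memD2_WN hA hw (mem_21_11 hA hn h11))
        (memD2_W hA (VF2 hA hw (mem_21_12 hA hn h12)))
    · have hyg : y*(w*n) = ((p22 e y)*w)*n := by
        conv_lhs => rw [psum (e := e) y]
        rw [add_mul, add_mul, add_mul, zero_11_21 hA h11 (mem_22_21 hA hw.1 hn),
            VF4 hA htf hw h12 hn, VF9 hA hw hn h21, VF8 hA hw hn h22]
        abel
      rw [hyg]
      exact memD2_WN hA (VF1 hA hw h22) hn

lemma D2_mul (htf : ThreeTorsionFree R) (he : e*e = e)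
    {d : R} (hd : d ∈ D2grp e) (y : R) : d*y ∈ D2grp e ∧ y*d ∈ D2grp e := by
  induction hd using AddSubgroup.closure_induction with
  | mem g hg => exact D2_gen_mul hA htf he hg y
  | zero =>
      constructor <;> simp only [zero_mul, mul_zero] <;> exact AddSubgroup.zero_mem _
  | add a b ha hb iha ihb =>
      constructor
      · rw [add_mul]; exact AddSubgroup.add_mem _ iha.1 ihb.1
      · rw [mul_add]; exact AddSubgroup.add_mem _ iha.2 ihb.2
  | neg a ha iha =>
      constructor
      · rw [neg_mul]; exact AddSubgroup.neg_mem _ iha.1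
      · rw [mul_neg]; exact AddSubgroup.neg_mem _ iha.2

lemma K2_kills_D2 (htf : ThreeTorsionFree R) (he : e*e = e)
    {d : R} (hd : d ∈ D2grp e) {x : R} (hx : x ∈ K2set e) : x*d = 0 := by
  have h11 := hp11 hA he x
  have h12 := hp12 hA he x
  have h21 := hp21 hA he x
  have h22 := hp22 hA he x
  induction hd using AddSubgroup.closure_induction with
  | mem g hg =>
      rcases hg with hw | ⟨w, hw, n, hn, rfl⟩
      · conv_lhs => rw [psum (e := e) x]
        rw [add_mul, add_mul, add_mul, zero_11_22 hA htf h11 hw.1,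
            hw.2 _ h12, zero_21_22 hA h21 hw.1, hx _ hw]
        abel
      · conv_lhs => rw [psum (e := e) x]
        rw [add_mul, add_mul, add_mul, zero_11_21 hA h11 (mem_22_21 hA hw.1 hn),
            VF4 hA htf hw h12 hn, VF9 hA hw hn h21, VF8 hA hw hn h22,
            hx _ hw, zero_mul]
        abel
  | zero => rw [mul_zero]
  | add a b ha hb iha ihb => rw [mul_add, iha, ihb, add_zero]
  | neg a ha iha => rw [mul_neg, iha, neg_zero]

lemma K2_ideal (htf : ThreeTorsionFree R) (he : e*e = e) :
    IsTwoSidedIdealSet (K2set e) := by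
  refine ⟨?_, ?_, ?_, ?_⟩
  · intro w hw; rw [p22_zero, zero_mul]
  · intro a b ha hb w hw
    rw [p22_add, add_mul, ha _ hw, hb _ hw, add_zero]
  · intro a ha w hw
    rw [p22_neg, neg_mul, ha _ hw, neg_zero]
  · intro r a ha
    have ha22 := hp22 hA he a
    have hr22 := hp22 hA he r
    have hKa : ∀ w' ∈ W2set e, p22 e a * w' = 0 := ha
    constructor
    · intro w hw
      have hmul : p22 e (r*a) = p21 e r * p12 e a + p22 e r * p22 e a := by
        conv_lhs => rw [psum (e := e) r, psum (e := e) a]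
        exact p22_mul' hA htf (hp11 hA he r) (hp12 hA he r) (hp21 hA he r)
          (hp22 hA he r) (hp11 hA he a) (hp12 hA he a) (hp21 hA he a) (hp22 hA he a)
      rw [hmul, add_mul, VF3 hA hw (hp12 hA he a) (hp21 hA he r),
          (VF12 hA hw hr22 ha22 hKa).2, add_zero]
    · intro w hw
      have hmul : p22 e (a*r) = p21 e a * p12 e r + p22 e a * p22 e r := by
        conv_lhs => rw [psum (e := e) a, psum (e := e) r]
        exact p22_mul' hA htf (hp11 hA he a) (hp12 hA he a) (hp21 hA he a)
          (hp22 hA he a) (hp11 hA he r) (hp12 hA he r) (hp21 hA he r) (hp22 hA he r)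
      rw [hmul, add_mul, VF3 hA hw (hp12 hA he r) (hp21 hA he a),
          (VF12 hA hw hr22 ha22 hKa).1, add_zero]

lemma D2_ideal (htf : ThreeTorsionFree R) (he : e*e = e) :
    IsTwoSidedIdealSet ((D2grp e : AddSubgroup R) : Set R) := by
  refine ⟨AddSubgroup.zero_mem _, ?_, ?_, ?_⟩
  · intro a b ha hb; exact AddSubgroup.add_mem _ ha hb
  · intro a ha; exact AddSubgroup.neg_mem _ ha
  · intro r a ha
    have := D2_mul hA htf he ha r
    exact ⟨this.2, this.1⟩

lemma LB (htf : ThreeTorsionFree R) (he : e*e = e) (hpr : IsPrimeRing R)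
    (hm0 : ∃ m ∈ peirce12 e, m ≠ (0:R))
    {w : R} (hw : w ∈ W2set e) : w = 0 := by
  by_contra hw0
  obtain ⟨m0, hm0mem, hm0ne⟩ := hm0
  have hDne : ((D2grp e : AddSubgroup R) : Set R) ≠ {0} := by
    intro h
    apply hw0
    have hmem : w ∈ ((D2grp e : AddSubgroup R) : Set R) := memD2_W hA hw
    rw [h] at hmem
    exact hmem
  have hKne : K2set e ≠ {0} := by
    intro h
    have : m0 ∈ K2set e := by
      intro w' hw'
      rw [p22_of_12 hm0mem, zero_mul]
    rw [h] at this
    exact hm0ne this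
  obtain ⟨k, hk, d, hd, hne⟩ := hpr _ _ (K2_ideal hA htf he) (D2_ideal hA htf he) hKne hDne
  exact hne (K2_kills_D2 hA htf he hd hk)

end LB
section TS
variable (hA : IsAlternative R)
include hA
variable {e : R}

def Tset (e : R) : Set R := {x | x ∈ peirce21 e ∧
  (∀ m ∈ peirce12 e, x*m = 0 ∧ m*x = 0) ∧ (∀ n ∈ peirce21 e, x*n = 0 ∧ n*x = 0)}

lemma T_mul_11 {x r : R} (hx : x ∈ Tset e) (hr : r ∈ peirce11 e) : x*r ∈ Tset e := by
  obtain ⟨hx21, hxm, hxn⟩ := hx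
  have asoA : ∀ m ∈ peirce12 e, aso x r m = 0 := by
    intro m hm
    rw [aso_12 hA r x m]
    simp only [aso]
    rw [zero_11_21 hA hr hx21, zero_mul, (hxm m hm).1, mul_zero, sub_zero, neg_zero]
  refine ⟨mem_21_11 hA hx21 hr, fun m hm => ?_, fun n' hn' => ?_⟩
  · constructor
    · have ha := asoA m hm
      simp only [aso, sub_eq_zero] at ha
      rw [ha, (hxm _ (mem_11_12 hA hr hm)).1]
    · have ha : aso m x r = 0 := by rw [aso_cyc hA m x r]; exact asoA m hm
      simp only [aso] at ha
      rw [(hxm m hm).2, zero_mul, zero_sub, neg_eq_zero] at ha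
      exact ha
  · constructor
    · have hb : aso x n' r = 0 := by
        simp only [aso]
        rw [(hxn n' hn').1, zero_mul, (hxn _ (mem_21_11 hA hn' hr)).1, sub_zero]
      have ha : aso x r n' = 0 := by rw [aso_23 hA x n' r, hb, neg_zero]
      simp only [aso] at ha
      rw [zero_11_21 hA hr hn', mul_zero, sub_zero] at ha
      exact ha
    · have hb : aso x n' r = 0 := by
        simp only [aso]
        rw [(hxn n' hn').1, zero_mul, (hxn _ (mem_21_11 hA hn' hr)).1, sub_zero]
      have ha : aso n' x r = 0 := by
        rw [aso_cyc hA n' x r, aso_23 hA x n' r, hb, neg_zero]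
      simp only [aso] at ha
      rw [(hxn n' hn').2, zero_mul, zero_sub, neg_eq_zero] at ha
      exact ha

lemma T_mul_22 {x s : R} (hx : x ∈ Tset e) (hs : s ∈ peirce22 e) : s*x ∈ Tset e := by
  obtain ⟨hx21, hxm, hxn⟩ := hx
  have asoA : ∀ m ∈ peirce12 e, aso s x m = 0 := by
    intro m hm
    rw [aso_cyc hA s x m]
    simp only [aso]
    rw [(hxm m hm).1, zero_mul, (hxm _ (mem_12_22 hA hm hs)).1, zero_sub, neg_zero]
  refine ⟨mem_22_21 hA hs hx21, fun m hm => ?_, fun n' hn' => ?_⟩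
  · constructor
    · have ha := asoA m hm
      simp only [aso] at ha
      rw [(hxm m hm).1, mul_zero, sub_zero] at ha
      exact ha
    · have ha : aso m s x = 0 := by rw [aso_cyc hA m s x]; exact asoA m hm
      simp only [aso] at ha
      rw [(hxm _ (mem_12_22 hA hm hs)).2, zero_sub, neg_eq_zero] at ha
      exact ha
  · constructor
    · have hb : aso x s n' = 0 := by
        simp only [aso]
        rw [zero_21_22 hA hx21 hs, zero_mul, (hxn _ (mem_22_21 hA hs hn')).1, sub_zero]
      have ha : aso s x n' = 0 := by rw [aso_12 hA x s n', hb, neg_zero]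
      simp only [aso] at ha
      rw [(hxn n' hn').1, mul_zero, sub_zero] at ha
      exact ha
    · have hb : aso x s n' = 0 := by
        simp only [aso]
        rw [zero_21_22 hA hx21 hs, zero_mul, (hxn _ (mem_22_21 hA hs hn')).1, sub_zero]
      have ha : aso n' s x = 0 := by
        rw [aso_cyc hA n' s x, aso_12 hA x s n', hb, neg_zero]
      simp only [aso] at ha
      rw [zero_21_22 hA hn' hs, zero_mul, zero_sub, neg_eq_zero] at ha
      exact ha

lemma T_ideal (htf : ThreeTorsionFree R) (he : e*e = e) :
    IsTwoSidedIdealSet (Tset e) := by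
  have hzero : (0:R) ∈ Tset e := by
    refine ⟨⟨mul_zero e, zero_mul e⟩, fun m hm => ⟨zero_mul m, mul_zero m⟩,
      fun n hn => ⟨zero_mul n, mul_zero n⟩⟩
  refine ⟨hzero, ?_, ?_, ?_⟩
  · rintro x y ⟨hx1, hx2, hx3⟩ ⟨hy1, hy2, hy3⟩
    refine ⟨⟨?_, ?_⟩, fun m hm => ⟨?_, ?_⟩, fun n hn => ⟨?_, ?_⟩⟩
    · rw [mul_add, hx1.1, hy1.1, add_zero]
    · rw [add_mul, hx1.2, hy1.2]
    · rw [add_mul, (hx2 m hm).1, (hy2 m hm).1, add_zero]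
    · rw [mul_add, (hx2 m hm).2, (hy2 m hm).2, add_zero]
    · rw [add_mul, (hx3 n hn).1, (hy3 n hn).1, add_zero]
    · rw [mul_add, (hx3 n hn).2, (hy3 n hn).2, add_zero]
  · rintro x ⟨hx1, hx2, hx3⟩
    refine ⟨⟨?_, ?_⟩, fun m hm => ⟨?_, ?_⟩, fun n hn => ⟨?_, ?_⟩⟩
    · rw [mul_neg, hx1.1, neg_zero]
    · rw [neg_mul, hx1.2]
    · rw [neg_mul, (hx2 m hm).1, neg_zero]
    · rw [mul_neg, (hx2 m hm).2, neg_zero]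
    · rw [neg_mul, (hx3 n hn).1, neg_zero]
    · rw [mul_neg, (hx3 n hn).2, neg_zero]
  · intro r x hx
    obtain ⟨hx21, hxm, hxn⟩ := hx
    have h11 := hp11 hA he r
    have h12 := hp12 hA he r
    have h21 := hp21 hA he r
    have h22 := hp22 hA he r
    constructor
    · have hrx : r*x = (p22 e r)*x := by
        conv_lhs => rw [psum (e := e) r]
        rw [add_mul, add_mul, add_mul, zero_11_21 hA h11 hx21,
            (hxm _ h12).2, (hxn _ h21).2]
        abel
      rw [hrx]
      exact T_mul_22 hA ⟨hx21, hxm, hxn⟩ h22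
    · have hxr : x*r = x*(p11 e r) := by
        conv_lhs => rw [psum (e := e) r]
        rw [mul_add, mul_add, mul_add, (hxm _ h12).1, (hxn _ h21).1,
            zero_21_22 hA hx21 h22]
        abel
      rw [hxr]
      exact T_mul_11 hA ⟨hx21, hxm, hxn⟩ h11

lemma T_zero (htf : ThreeTorsionFree R) (he : e*e = e) (hpr : IsPrimeRing R)
    {x : R} (hx : x ∈ Tset e) : x = 0 := by
  by_contra hx0
  have hTne : Tset e ≠ {0} := by
    intro h; rw [h] at hx; exact hx0 hx
  obtain ⟨u, hu, v, hv, hne⟩ := hpr _ _ (T_ideal hA htf he) (T_ideal hA htf he) hTne hTne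
  exact hne ((hu.2.2 v hv.1).1)

-- P12 is nonzero
lemma ex12 (htf : ThreeTorsionFree R) (hpr : IsPrimeRing R)
    {e : R} (he : e*e = e) (hene : e ≠ 0)
    (hid : ¬ (∀ x : R, e * x = x ∧ x * e = x)) :
    ∃ m ∈ peirce12 e, m ≠ (0:R) := by
  by_contra hcon
  push_neg at hcon
  have h12 : ∀ m ∈ peirce12 e, m = (0:R) := hcon
  set A : Set R := {x | x * e = x} with hAdef
  set B : Set R := {x | e * x = 0} with hBdef
  have hdecA : ∀ a ∈ A, a = p11 e a + p21 e a := by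
    intro a haA
    have h1 : p12 e a = 0 := h12 _ (hp12 hA he a)
    have h2 : p22 e a = 0 := by
      simp only [p22]
      rw [show a*e = a from haA]
      abel
    have h3 := psum (e := e) a
    rw [h1, h2] at h3
    simp only [add_zero, zero_add] at h3
    exact h3
  have hdecB : ∀ b ∈ B, b = p21 e b + p22 e b := by
    intro b hbB
    have hb0 : e*b = 0 := hbB
    have h1 : p11 e b = 0 := by
      simp only [p11]
      rw [← flex_e hA b, hb0, zero_mul]
    have h2 : p12 e b = 0 := h12 _ (hp12 hA he b)
    have h3 := psum (e := e) b
    rw [h1, h2] at h3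
    simp only [add_zero, zero_add] at h3
    exact h3
  have hAideal : IsTwoSidedIdealSet A := by
    refine ⟨zero_mul e, ?_, ?_, ?_⟩
    · intro x y hx hy
      show (x+y)*e = x+y
      rw [add_mul, show x*e = x from hx, show y*e = y from hy]
    · intro x hx
      show (-x)*e = -x
      rw [neg_mul, show x*e = x from hx]
    · intro r a haA
      have hda := hdecA a haA
      have ha11 := hp11 hA he a
      have ha21 := hp21 hA he a
      have hr11 := hp11 hA he r
      have hr21 := hp21 hA he r
      have hr22 := hp22 hA he r
      have hr12 : p12 e r = 0 := h12 _ (hp12 hA he r)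
      have hdr : r = p11 e r + p21 e r + p22 e r := by
        have h3 := psum (e := e) r
        rw [hr12] at h3
        simp only [add_zero, zero_add] at h3
        exact h3
      constructor
      · have hexp : r*a = (p11 e r)*(p11 e a) +
            ((p21 e r)*(p11 e a) + (p22 e r)*(p21 e a)) := by
          conv_lhs => rw [hdr, hda]
          simp only [add_mul, mul_add]
          rw [zero_22_11 hA htf hr22 ha11, zero_11_21 hA hr11 ha21,
              h12 _ (mem_21_21 hA hr21 ha21)]
          abel
        show (r*a)*e = r*a
        rw [hexp, add_mul, add_mul, (mem_11_11 hA hr11 ha11).2,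
            (mem_21_11 hA hr21 ha11).2, (mem_22_21 hA hr22 ha21).2]
      · have hexp : a*r = (p11 e a)*(p11 e r) + (p21 e a)*(p11 e r) := by
          conv_lhs => rw [hda, hdr]
          simp only [add_mul, mul_add]
          rw [zero_11_21 hA ha11 hr21, zero_11_22 hA htf ha11 hr22,
              h12 _ (mem_21_21 hA ha21 hr21), zero_21_22 hA ha21 hr22]
          abel
        show (a*r)*e = a*r
        rw [hexp, add_mul, (mem_11_11 hA ha11 hr11).2, (mem_21_11 hA ha21 hr11).2]
  have hBideal : IsTwoSidedIdealSet B := by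
    refine ⟨mul_zero e, ?_, ?_, ?_⟩
    · intro x y hx hy
      show e*(x+y) = 0
      rw [mul_add, show e*x = 0 from hx, show e*y = 0 from hy, add_zero]
    · intro x hx
      show e*(-x) = 0
      rw [mul_neg, show e*x = 0 from hx, neg_zero]
    · intro r b hbB
      have hdb := hdecB b hbB
      have hb21 := hp21 hA he b
      have hb22 := hp22 hA he b
      have hr11 := hp11 hA he r
      have hr21 := hp21 hA he r
      have hr22 := hp22 hA he r
      have hr12 : p12 e r = 0 := h12 _ (hp12 hA he r)
      have hdr : r = p11 e r + p21 e r + p22 e r := by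
        have h3 := psum (e := e) r
        rw [hr12] at h3
        simp only [add_zero, zero_add] at h3
        exact h3
      constructor
      · have hexp : r*b = (p22 e r)*(p21 e b) + (p22 e r)*(p22 e b) := by
          conv_lhs => rw [hdr, hdb]
          simp only [add_mul, mul_add]
          rw [zero_11_21 hA hr11 hb21, zero_11_22 hA htf hr11 hb22,
              h12 _ (mem_21_21 hA hr21 hb21), zero_21_22 hA hr21 hb22]
          abel
        show e*(r*b) = 0
        rw [hexp, mul_add, (mem_22_21 hA hr22 hb21).1, (mem_22_22 hA hr22 hb22).1,
            add_zero]
      · have hexp : b*r = (p21 e b)*(p11 e r) +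
            ((p22 e b)*(p21 e r) + (p22 e b)*(p22 e r)) := by
          conv_lhs => rw [hdb, hdr]
          simp only [add_mul, mul_add]
          rw [h12 _ (mem_21_21 hA hb21 hr21), zero_21_22 hA hb21 hr22,
              zero_22_11 hA htf hb22 hr11]
          abel
        show e*(b*r) = 0
        rw [hexp, mul_add, mul_add, (mem_21_11 hA hb21 hr11).1,
            (mem_22_21 hA hb22 hr21).1, (mem_22_22 hA hb22 hr22).1, add_zero, add_zero]
  have hABzero : ∀ a ∈ A, ∀ b ∈ B, a*b = 0 := by
    intro a haA b hbB
    have hda := hdecA a haA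
    have hdb := hdecB b hbB
    have ha11 := hp11 hA he a
    have ha21 := hp21 hA he a
    have hb21 := hp21 hA he b
    have hb22 := hp22 hA he b
    rw [hda, hdb]
    simp only [add_mul, mul_add]
    rw [zero_11_21 hA ha11 hb21, zero_11_22 hA htf ha11 hb22,
        h12 _ (mem_21_21 hA ha21 hb21), zero_21_22 hA ha21 hb22]
    abel
  have hAne : A ≠ {0} := by
    intro h
    have : e ∈ A := he
    rw [h] at this
    exact hene this
  have hB0 : B = {0} := by
    by_contra hBne
    obtain ⟨a, haA, b, hbB, hne⟩ := hpr A B hAideal hBideal hAne hBne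
    exact hne (hABzero a haA b hbB)
  apply hid
  intro x
  have h1 : p12 e x = 0 := h12 _ (hp12 hA he x)
  have h2 : p21 e x = 0 := by
    have : p21 e x ∈ B := (hp21 hA he x).1
    rw [hB0] at this
    exact this
  have h3 : p22 e x = 0 := by
    have : p22 e x ∈ B := (hp22 hA he x).1
    rw [hB0] at this
    exact this
  have hx : x = p11 e x := by
    have h4 := psum (e := e) x
    rw [h1, h2, h3] at h4
    simp only [add_zero, zero_add] at h4
    exact h4
  constructor
  · rw [hx]
    exact (hp11 hA he x).1
  · rw [hx]
    exact (hp11 hA he x).2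

end TS


section Master
variable (hA : IsAlternative R)
include hA
variable {e : R}


omit hA in
lemma lie_identity (x y z : R) :
    lieBr (x*y) z - x * lieBr y z - lieBr x z * y
      = aso x y z - aso x z y + aso z x y := by
  simp only [lieBr, aso, mul_sub, sub_mul]
  abel

-- main u-step computation
lemma ustep (htf : ThreeTorsionFree R) {a b r m : R}
    (ha : a ∈ peirce11 e) (hb : b ∈ peirce22 e) (hr : r ∈ peirce11 e)
    (hm : m ∈ peirce12 e) (hH : ∀ m' ∈ peirce12 e, a*m' = m'*b) :
    (a*r)*m = (r*a)*m := by
  have e1 : aso a r m = 0 := by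
    rw [aso_cyc hA a r m]
    simp only [aso]
    rw [zero_12_11 hA (mem_11_12 hA hr hm) ha, zero_12_11 hA hm ha,
        mul_zero, sub_zero]
  have e2 : aso r a m = 0 := by rw [aso_12 hA a r m, e1, neg_zero]
  have e3 : aso r m b = 0 := by
    rw [aso_cyc hA r m b]
    simp only [aso]
    rw [zero_12_11 hA (mem_12_22 hA hm hb) hr, zero_22_11 hA htf hb hr,
        mul_zero, sub_zero]
  simp only [aso, sub_eq_zero] at e1 e2 e3
  rw [e1, e2, hH _ (mem_11_12 hA hr hm), hH _ hm, e3]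

-- main v-step computation
lemma vstep (htf : ThreeTorsionFree R) {a b s m : R}
    (ha : a ∈ peirce11 e) (hb : b ∈ peirce22 e) (hs : s ∈ peirce22 e)
    (hm : m ∈ peirce12 e) (hH : ∀ m' ∈ peirce12 e, a*m' = m'*b) :
    m*(b*s) = m*(s*b) := by
  have e1 : aso m b s = 0 := by
    rw [aso_cyc hA m b s]
    simp only [aso]
    rw [zero_22_12 hA (mem_22_22 hA hb hs) hm, zero_22_12 hA hs hm,
        mul_zero, sub_zero]
  have e2 : aso a m s = 0 := by
    rw [aso_cyc hA a m s]
    simp only [aso]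
    rw [zero_12_11 hA (mem_12_22 hA hm hs) ha, zero_22_11 hA htf hs ha,
        mul_zero, sub_zero]
  have e3 : aso m s b = 0 := by
    rw [aso_cyc hA m s b]
    simp only [aso]
    rw [zero_22_12 hA (mem_22_22 hA hs hb) hm, zero_22_12 hA hb hm,
        mul_zero, sub_zero]
  simp only [aso, sub_eq_zero] at e1 e2 e3
  rw [← e1, ← hH _ hm, ← e3, e2, hH _ (mem_12_22 hA hm hs)]

theorem masterCondI (htf : ThreeTorsionFree R) (hpr : IsPrimeRing R)
    {e : R} (heI : e*e = e) (hene : e ≠ 0)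
    (hid : ¬ (∀ x : R, e * x = x ∧ x * e = x))
    {a b : R} (ha : a ∈ peirce11 e) (hb : b ∈ peirce22 e)
    (hcomm : ∀ m ∈ peirce12 e, lieBr (a + b) m = 0) :
    (a + b) ∈ ringCenter R := by
  have hm0 : ∃ m ∈ peirce12 e, m ≠ (0:R) := ex12 hA htf hpr heI hene hid
  -- hypothesis H
  have hH : ∀ m ∈ peirce12 e, a*m = m*b := by
    intro m hm
    have h1 : b*m = 0 := zero_22_12 hA hb hm
    have h2 : m*a = 0 := zero_12_11 hA hm ha
    have h3 := hcomm m hm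
    simp only [lieBr, add_mul, mul_add, h1, h2, add_zero, zero_add] at h3
    exact sub_eq_zero.mp h3
  -- u-step : a commutes with P11
  have hu : ∀ r ∈ peirce11 e, a*r = r*a := by
    intro r hr
    have hmem : a*r - r*a ∈ Wset e := by
      constructor
      · have m1 := mem_11_11 hA ha hr
        have m2 := mem_11_11 hA hr ha
        exact ⟨by rw [mul_sub, m1.1, m2.1], by rw [sub_mul, m1.2, m2.2]⟩
      · intro m hm
        rw [sub_mul, ustep hA htf ha hb hr hm hH, sub_self]
    have := LA hA htf heI hpr hm0 hmem
    rw [sub_eq_zero] at this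
    exact this
  -- v-step : b commutes with P22
  have hv : ∀ s ∈ peirce22 e, b*s = s*b := by
    intro s hs
    have hmem : b*s - s*b ∈ W2set e := by
      constructor
      · have m1 := mem_22_22 hA hb hs
        have m2 := mem_22_22 hA hs hb
        exact ⟨by rw [mul_sub, m1.1, m2.1, sub_self], by rw [sub_mul, m1.2, m2.2, sub_self]⟩
      · intro m hm
        rw [mul_sub, vstep hA htf ha hb hs hm hH, sub_self]
    have := LB hA htf heI hpr hm0 hmem
    rw [sub_eq_zero] at this
    exact this
  -- t-step : b*n = n*a for n in P21
  have ht : ∀ n ∈ peirce21 e, b*n = n*a := by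
    intro n hn
    have hbn := mem_22_21 hA hb hn
    have hna := mem_21_11 hA hn ha
    have htm : (b*n - n*a) ∈ Tset e := by
      refine ⟨⟨by rw [mul_sub, hbn.1, hna.1, sub_self],
               by rw [sub_mul, hbn.2, hna.2]⟩, ?_, ?_⟩
      · intro m hm
        have eA0 : aso b m n = 0 := by
          simp only [aso]
          rw [zero_22_12 hA hb hm, zero_mul,
              zero_22_11 hA htf hb (mem_12_21 hA hm hn), sub_zero]
        have eA : aso m b n = 0 := by rw [aso_12 hA b m n, eA0, neg_zero]
        constructor
        · -- (b*n - n*a)*m = 0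
          have eD0 : aso n b m = 0 := by
            simp only [aso]
            rw [zero_21_22 hA hn hb, zero_mul, zero_22_12 hA hb hm, mul_zero,
                sub_zero]
          have eD : aso b n m = 0 := by rw [aso_12 hA n b m, eD0, neg_zero]
          have eE0 : aso a n m = 0 := by
            simp only [aso]
            rw [zero_11_21 hA ha hn, zero_mul,
                zero_11_22 hA htf ha (mem_21_12 hA hn hm), sub_zero]
          have eE : aso n a m = 0 := by rw [aso_12 hA a n m, eE0, neg_zero]
          have eF : aso n m b = 0 := by rw [aso_cyc hA n m b]; exact eA
          simp only [aso, sub_eq_zero] at eD eE eF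
          rw [sub_mul, eD, eE, hH m hm, ← eF, hv _ (mem_21_12 hA hn hm), sub_self]
        · -- m*(b*n - n*a) = 0
          have eB0 : aso m a n = 0 := by
            simp only [aso]
            rw [zero_12_11 hA hm ha, zero_mul, zero_11_21 hA ha hn, mul_zero,
                sub_zero]
          have eB : aso a m n = 0 := by rw [aso_12 hA m a n, eB0, neg_zero]
          have eC : aso m n a = 0 := by rw [aso_23 hA m a n, eB0, neg_zero]
          have eA' := eA
          simp only [aso, sub_eq_zero] at eA' eB eC
          rw [mul_sub, ← eA', ← hH m hm, eB, ← eC, hu _ (mem_12_21 hA hm hn), sub_self]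
      · intro n' hn'
        have eG0 : aso n n' b = (n*n')*b := by
          simp only [aso]
          rw [zero_21_22 hA hn' hb, mul_zero, sub_zero]
        have eH0 : aso a n n' = -(a*(n*n')) := by
          simp only [aso]
          rw [zero_11_21 hA ha hn, zero_mul, zero_sub]
        have eH : aso n a n' = a*(n*n') := by rw [aso_12 hA a n n', eH0, neg_neg]
        constructor
        · -- (b*n - n*a)*n' = 0
          have h1 : (b*n)*n' = (n*n')*b := by
            have h' : aso b n n' = (b*n)*n' - b*(n*n') := rfl
            rw [zero_22_12 hA hb (mem_21_21 hA hn hn'), sub_zero] at h'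
            rw [← h', aso_cyc hA b n n', eG0]
          have h2 : (n*a)*n' = a*(n*n') := by
            have h' : aso n a n' = (n*a)*n' - n*(a*n') := rfl
            rw [zero_11_21 hA ha hn', mul_zero, sub_zero] at h'
            rw [← h', eH]
          rw [sub_mul, h1, h2, ← hH _ (mem_21_21 hA hn hn'), sub_self]
        · -- n'*(b*n - n*a) = 0
          have h1 : n'*(b*n) = -((n*n')*b) := by
            have h' : aso n' b n = (n'*b)*n - n'*(b*n) := rfl
            rw [zero_21_22 hA hn' hb, zero_mul, zero_sub] at h'
            rw [aso_cyc hA n' b n, aso_cyc hA b n n', eG0] at h'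
            exact neg_eq_iff_eq_neg.mp h'.symm
          have h2 : n'*(n*a) = -(a*(n*n')) := by
            have h' : aso n' n a = (n'*n)*a - n'*(n*a) := rfl
            rw [zero_12_11 hA (mem_21_21 hA hn' hn) ha, zero_sub] at h'
            rw [aso_cyc hA n' n a, eH] at h'
            exact neg_eq_iff_eq_neg.mp h'.symm
          rw [mul_sub, h1, h2, hH _ (mem_21_21 hA hn hn'), sub_self]
    have := T_zero hA htf heI hpr htm
    rw [sub_eq_zero] at this
    exact this
  -- commutation with everything
  have hcom : ∀ x, (a+b)*x = x*(a+b) := by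
    intro x
    have h11 := hp11 hA heI x
    have h12 := hp12 hA heI x
    have h21 := hp21 hA heI x
    have h22 := hp22 hA heI x
    conv_lhs => rw [psum (e := e) x]
    conv_rhs => rw [psum (e := e) x]
    simp only [mul_add, add_mul]
    rw [zero_22_11 hA htf hb h11, zero_22_12 hA hb h12, zero_11_21 hA ha h21,
        zero_11_22 hA htf ha h22, zero_12_11 hA h12 ha, zero_11_22 hA htf h11 hb,
        zero_21_22 hA h21 hb, zero_22_11 hA htf h22 ha,
        hu _ h11, hH _ h12, ht _ h21, hv _ h22]
    abel
  -- associators with a+b vanish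
  have hz3 : ∀ x y, aso x y (a+b) = 0 := by
    intro x y
    have hid2 := lie_identity (R := R) x y (a+b)
    have l1 : lieBr (x*y) (a+b) = 0 := by rw [lieBr, hcom (x*y), sub_self]
    have l2 : lieBr y (a+b) = 0 := by rw [lieBr, hcom y, sub_self]
    have l3 : lieBr x (a+b) = 0 := by rw [lieBr, hcom x, sub_self]
    rw [l1, l2, l3, mul_zero, zero_mul, sub_zero, sub_zero] at hid2
    rw [aso_23 hA x y (a+b), aso_cyc hA (a+b) x y, sub_neg_eq_add] at hid2
    exact htf _ hid2.symm
  refine ⟨?_, ?_, ?_, fun x => hcom x⟩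
  · intro x y
    have h0 : aso (a+b) x y = 0 := by rw [aso_cyc hA (a+b) x y]; exact hz3 x y
    simpa [aso, sub_eq_zero] using h0
  · intro x y
    have h0 : aso x (a+b) y = 0 := by rw [aso_23 hA x y (a+b), hz3 x y, neg_zero]
    simpa [aso, sub_eq_zero] using h0
  · intro x y
    have h0 := hz3 x y
    simpa [aso, sub_eq_zero] using h0
end Master

end AltP

theorem prime_satisfies_conditions
    {R : Type*} [NonUnitalNonAssocRing R]
    (hR : IsAlternative R) (htf : ThreeTorsionFree R) (hprime : IsPrimeRing R)
    (e : R) (he : IsNontrivialIdempotent e) :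
    CondI e ∧ CondII e := by
  obtain ⟨he1, hene, hid⟩ := he
  constructor
  · intro a b ha hb hcm
    exact AltP.masterCondI hR htf hprime he1 hene hid ha hb hcm
  · intro a b ha hb hcm
    have hA' : IsAlternative Rᵐᵒᵖ := by
      refine ⟨fun x y => ?_, fun x y => ?_⟩
      · apply MulOpposite.unop_injective
        simp only [MulOpposite.unop_mul]
        exact (hR.2 x.unop y.unop).symm
      · apply MulOpposite.unop_injective
        simp only [MulOpposite.unop_mul]
        exact (hR.1 x.unop y.unop).symm
    have htf' : ThreeTorsionFree Rᵐᵒᵖ := by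
      intro x hx
      have h' : x.unop + x.unop + x.unop = 0 := by
        simpa using congrArg MulOpposite.unop hx
      exact MulOpposite.unop_injective (by simpa using htf _ h')
    have transferIdeal : ∀ A : Set Rᵐᵒᵖ, IsTwoSidedIdealSet A →
        IsTwoSidedIdealSet {x : R | MulOpposite.op x ∈ A} := by
      intro A hA1
      refine ⟨by simpa using hA1.1, ?_, ?_, ?_⟩
      · intro u v hu hv
        show MulOpposite.op (u+v) ∈ A
        rw [MulOpposite.op_add]
        exact hA1.2.1 _ _ hu hv
      · intro u hu
        show MulOpposite.op (-u) ∈ A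
        rw [MulOpposite.op_neg]
        exact hA1.2.2.1 _ hu
      · intro r u hu
        constructor
        · show MulOpposite.op (r*u) ∈ A
          rw [MulOpposite.op_mul]
          exact (hA1.2.2.2 (MulOpposite.op r) _ hu).2
        · show MulOpposite.op (u*r) ∈ A
          rw [MulOpposite.op_mul]
          exact (hA1.2.2.2 (MulOpposite.op r) _ hu).1
    have transferNe : ∀ A : Set Rᵐᵒᵖ, (0:Rᵐᵒᵖ) ∈ A → A ≠ {0} →
        {x : R | MulOpposite.op x ∈ A} ≠ {0} := by
      intro A h0 hne h
      apply hne
      ext x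
      simp only [Set.mem_singleton_iff]
      constructor
      · intro hxA
        have hmem : x.unop ∈ {y : R | MulOpposite.op y ∈ A} := by simpa using hxA
        rw [h] at hmem
        exact MulOpposite.unop_injective (by simpa using hmem)
      · intro hx0; rw [hx0]; exact h0
    have hprime' : IsPrimeRing Rᵐᵒᵖ := by
      intro A B hA1 hB1 hA0 hB0
      obtain ⟨b', hb', a', ha', hne⟩ := hprime _ _ (transferIdeal B hB1)
        (transferIdeal A hA1) (transferNe B hB1.1 hB0) (transferNe A hA1.1 hA0)
      refine ⟨MulOpposite.op a', ha', MulOpposite.op b', hb', ?_⟩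
      intro hc
      rw [← MulOpposite.op_mul, ← MulOpposite.op_zero] at hc
      exact hne (MulOpposite.op_injective hc)
    have he1' : MulOpposite.op e * MulOpposite.op e = MulOpposite.op e := by
      rw [← MulOpposite.op_mul, he1]
    have hene' : MulOpposite.op e ≠ 0 := by simpa using hene
    have hid' : ¬ (∀ x : Rᵐᵒᵖ, MulOpposite.op e * x = x ∧ x * MulOpposite.op e = x) := by
      intro h
      apply hid
      intro x
      have hx := h (MulOpposite.op x)
      constructor
      · have h2 := hx.2
        rw [← MulOpposite.op_mul] at h2
        exact MulOpposite.op_injective h2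
      · have h2 := hx.1
        rw [← MulOpposite.op_mul] at h2
        exact MulOpposite.op_injective h2
    have ha' : MulOpposite.op a ∈ peirce11 (MulOpposite.op e) := by
      constructor
      · rw [← MulOpposite.op_mul, ha.2]
      · rw [← MulOpposite.op_mul, ha.1]
    have hb' : MulOpposite.op b ∈ peirce22 (MulOpposite.op e) := by
      constructor
      · rw [← MulOpposite.op_mul, hb.2, MulOpposite.op_zero]
      · rw [← MulOpposite.op_mul, hb.1, MulOpposite.op_zero]
    have hcm' : ∀ m ∈ peirce12 (MulOpposite.op e),
        lieBr (MulOpposite.op a + MulOpposite.op b) m = 0 := by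
      intro m hm
      have hm21 : m.unop ∈ peirce21 e := by
        constructor
        · have h2 := hm.2
          rw [← MulOpposite.op_unop m, ← MulOpposite.op_mul,
              ← MulOpposite.op_zero] at h2
          exact MulOpposite.op_injective h2
        · have h2 := hm.1
          rw [← MulOpposite.op_unop m, ← MulOpposite.op_mul] at h2
          exact MulOpposite.op_injective h2
      have hc := hcm m.unop hm21
      have key : lieBr (MulOpposite.op a + MulOpposite.op b) m
          = MulOpposite.op (- lieBr (a+b) m.unop) := by
        apply MulOpposite.unop_injective
        simp only [lieBr, MulOpposite.unop_sub, MulOpposite.unop_mul,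
          MulOpposite.unop_add, MulOpposite.unop_neg, MulOpposite.unop_op]
        abel
      rw [key, hc, neg_zero, MulOpposite.op_zero]
    have hz := AltP.masterCondI hA' htf' hprime' he1' hene' hid' ha' hb' hcm'
    rw [← MulOpposite.op_add] at hz
    obtain ⟨c1, c2, c3, c4⟩ := hz
    refine ⟨?_, ?_, ?_, ?_⟩
    · intro x y
      have h2 := c3 (MulOpposite.op y) (MulOpposite.op x)
      simp only [← MulOpposite.op_mul] at h2
      exact (MulOpposite.op_injective h2).symm
    · intro x y
      have h2 := c2 (MulOpposite.op y) (MulOpposite.op x)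
      simp only [← MulOpposite.op_mul] at h2
      exact (MulOpposite.op_injective h2).symm
    · intro x y
      have h2 := c1 (MulOpposite.op y) (MulOpposite.op x)
      simp only [← MulOpposite.op_mul] at h2
      exact (MulOpposite.op_injective h2).symm
    · intro x
      have h2 := c4 (MulOpposite.op x)
      simp only [← MulOpposite.op_mul] at h2
      exact (MulOpposite.op_injective h2).symm
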